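/- arXiv:2007.01376 — 2 statements merged into one kernel-verified Lean document; each statement's English description precedes it below -/
import Mathlib

section
/- For the Z channel, i.e. p = 0 and 0 < q < 1, and any 0 < θ < 1, for all sufficiently large n (k = ⌈n^θ⌉ → ∞), the Bernoulli-design DD bound strictly dominates the constant-column DD bound: m_DD^Ber(n,θ,0,q) > m_DD(n,θ,0,q). -/
open Real Set Filter

noncomputable section

/-- KL divergence between Bernoulli(r) and Bernoulli(s) (natural log, boundary by continuity). -/
def klBer (r s : ℝ) : ℝ := r * Real.log (r / s) + (1 - r) * Real.log ((1 - r) / (1 - s))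

/-- Feasible values for the constant-column DD bound on the Z channel. -/
def ddSetZ (θ q : ℝ) : Set ℝ :=
  {x | ∃ d α : ℝ, 0 < d ∧
    α ∈ Set.Ioo q (Real.exp (-d) + (1 - Real.exp (-d)) * q) ∧
    x = max (max (θ / (1 - θ) * (1 / (d * klBer α q)))
        (1 / (d * klBer α (Real.exp (-d) + (1 - Real.exp (-d)) * q))))
      (θ / (1 - θ) * (1 / (-d * Real.log (1 - Real.exp (-d) * (1 - q)))))}

/-- Feasible values for the Bernoulli-design DD bound on the Z channel
(the fourth bound of the general Bernoulli DD optimization vanishes when `p = 0`). -/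
def ddSetZBer (θ q : ℝ) (k : ℕ) : Set ℝ :=
  {x | ∃ ζ d α β : ℝ, 0 < ζ ∧ ζ < θ ∧ 0 < d ∧
    α ∈ Set.Ioo q (Real.exp (-d) + (1 - Real.exp (-d)) * q) ∧
    β ∈ Set.Ioo 0 (Real.exp (-d) * (1 - q)) ∧
    x = max (max (θ / (1 - θ) * (1 / (k * klBer (α * d / k) (q * d / k))))
        ((1 - ζ) / (1 - θ) *
          (1 / (k * klBer (α * d / k) ((Real.exp (-d) + (1 - Real.exp (-d)) * q) * d / k)))))
      (θ / (1 - θ) * (1 / (k * klBer (β * d / k) (Real.exp (-d) * (1 - q) * d / k))))}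

/-- `m_DD(n,θ,0,q)` for `k = ⌈n^θ⌉` (constant-column design, Z channel). -/
def mDDZ (n : ℕ) (θ q : ℝ) : ℝ :=
  sInf (ddSetZ θ q) *
    ((⌈(n : ℝ) ^ θ⌉₊ : ℝ) * Real.log (n / (⌈(n : ℝ) ^ θ⌉₊ : ℝ)))

/-- `m_DD^Ber(n,θ,0,q)` for `k = ⌈n^θ⌉` (Bernoulli design, Z channel). -/
def mDDZBer (n : ℕ) (θ q : ℝ) : ℝ :=
  sInf (ddSetZBer θ q ⌈(n : ℝ) ^ θ⌉₊) *
    ((⌈(n : ℝ) ^ θ⌉₊ : ℝ) * Real.log (n / (⌈(n : ℝ) ^ θ⌉₊ : ℝ)))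

/-- Poisson-type divergence. -/
def klP (r s : ℝ) : ℝ := r * Real.log (r / s) + s - r

lemma la {w : ℝ} (h0 : 0 ≤ w) (h1 : w < 1) : w + w ^ 2 / 2 ≤ -Real.log (1 - w) := by
  have habs : |w| < 1 := by rw [abs_of_nonneg h0]; exact h1
  have hs := Real.hasSum_pow_div_log_of_abs_lt_one habs
  have h2 := sum_le_hasSum (Finset.range 2) (fun i _ => by positivity) hs
  rw [Finset.sum_range_succ, Finset.sum_range_one] at h2
  norm_num at h2
  linarith

lemma lb {x : ℝ} (hx : 1 ≤ x) : Real.log x ≤ (x - 1 / x) / 2 := by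
  have h0 : (0:ℝ) < x := lt_of_lt_of_le one_pos hx
  have h := (Real.self_le_sinh_iff).2 (Real.log_nonneg hx)
  rwa [Real.sinh_eq, Real.exp_log h0, Real.exp_neg, Real.exp_log h0, ← one_div] at h

-- klP gap lemma: for 0 < a,b ≤ 1, (a-b)^2/2 ≤ klP a b
lemma klP_ge {a b : ℝ} (ha0 : 0 < a) (hb0 : 0 < b) (ha1 : a ≤ 1) (hb1 : b ≤ 1) :
    (a - b) ^ 2 / 2 ≤ klP a b := by
  unfold klP
  rcases le_total b a with hba | hab
  · -- a ≥ b : use la with w = (a-b)/a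
    have hw0 : 0 ≤ (a - b) / a := div_nonneg (by linarith) ha0.le
    have hw1 : (a - b) / a < 1 := by
      rw [div_lt_one ha0]; linarith
    have h := la hw0 hw1
    have he : (1 : ℝ) - (a - b) / a = b / a := by field_simp; ring
    rw [he, Real.log_div hb0.ne' ha0.ne'] at h
    have hlog : Real.log (a / b) = -(Real.log b - Real.log a) := by
      rw [Real.log_div ha0.ne' hb0.ne']; ring
    rw [hlog]
    have h' := mul_le_mul_of_nonneg_left h ha0.le
    -- a * ((a-b)/a + ((a-b)/a)^2/2) ≤ a * (-(log b - log a))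
    have hexp : a * ((a - b) / a + ((a - b) / a) ^ 2 / 2) = (a - b) + (a - b) ^ 2 / (2 * a) := by
      field_simp
    rw [hexp] at h'
    have : (a - b) ^ 2 / 2 ≤ (a - b) ^ 2 / (2 * a) := by
      rw [div_le_div_iff₀ two_pos (by positivity)]
      nlinarith [sq_nonneg (a - b)]
    nlinarith [h']
  · -- a ≤ b : use lb with x = b/a
    have hx : 1 ≤ b / a := (one_le_div ha0).2 hab
    have h := lb hx
    have h' := mul_le_mul_of_nonneg_left h ha0.le
    have hba' : (0:ℝ) < b / a := by positivity
    have hexp : a * ((b / a - 1 / (b / a)) / 2) = (b ^ 2 - a ^ 2) / (2 * b) := by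
      field_simp
    rw [hexp] at h'
    have hlog : Real.log (a / b) = -Real.log (b / a) := by
      rw [Real.log_div ha0.ne' hb0.ne', Real.log_div hb0.ne' ha0.ne']; ring
    rw [hlog]
    have h2 : (a - b) ^ 2 / 2 ≤ (a - b) ^ 2 / (2 * b) := by
      rw [div_le_div_iff₀ two_pos (by positivity)]
      nlinarith [sq_nonneg (a - b)]
    have h3 : (a - b) ^ 2 / (2 * b) = -((b ^ 2 - a ^ 2) / (2 * b)) + b - a := by
      field_simp; ring
    nlinarith [h']

lemma klBer_decomp {r s : ℝ} : klBer r s = klP r s + klP (1 - r) (1 - s) := by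
  unfold klBer klP; ring

lemma klBer_ge_sq {r s : ℝ} (hr0 : 0 < r) (hr1 : r < 1) (hs0 : 0 < s) (hs1 : s < 1) :
    (r - s) ^ 2 ≤ klBer r s := by
  have h1 := klP_ge hr0 hs0 hr1.le hs1.le
  have h2 := klP_ge (by linarith : (0:ℝ) < 1 - r) (by linarith : (0:ℝ) < 1 - s)
    (by linarith) (by linarith)
  rw [klBer_decomp]
  have : (1 - r - (1 - s)) ^ 2 = (r - s) ^ 2 := by ring
  nlinarith

lemma klBer_pos {r s : ℝ} (hr0 : 0 < r) (hr1 : r < 1) (hs0 : 0 < s) (hs1 : s < 1)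
    (hne : r ≠ s) : 0 < klBer r s := by
  have := klBer_ge_sq hr0 hr1 hs0 hs1
  have : (0:ℝ) < (r - s) ^ 2 := by
    have : r - s ≠ 0 := sub_ne_zero.2 hne
    positivity
  linarith [klBer_ge_sq hr0 hr1 hs0 hs1]

lemma neg_log_le {x : ℝ} (h0 : 0 ≤ x) (h1 : x ≤ 1/2) : -Real.log (1 - x) ≤ x + 2 * x ^ 2 := by
  have hx1 : (0:ℝ) < 1 - x := by linarith
  have h := Real.one_sub_inv_le_log_of_pos hx1
  have hinv : 1 - (1 - x)⁻¹ = -(x / (1 - x)) := by field_simp; ring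
  rw [hinv] at h
  have h2 : x / (1 - x) ≤ x + 2 * x ^ 2 := by
    rw [div_le_iff₀ hx1]; nlinarith
  linarith

lemma neg_log_ge {x : ℝ} (h0 : 0 ≤ x) (h1 : x < 1) : x + x ^ 2 / 2 ≤ -Real.log (1 - x) :=
  la h0 h1

lemma chi2 {r s : ℝ} (hr0 : 0 < r) (hr1 : r < 1) (hs0 : 0 < s) (hs1 : s < 1) :
    klBer r s ≤ (r - s) ^ 2 / (s * (1 - s)) := by
  unfold klBer
  have h1 : Real.log (r / s) ≤ r / s - 1 := Real.log_le_sub_one_of_pos (by positivity)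
  have h2 : Real.log ((1 - r) / (1 - s)) ≤ (1 - r) / (1 - s) - 1 :=
    Real.log_le_sub_one_of_pos (by apply div_pos <;> linarith)
  have hs' : s ≠ 0 := hs0.ne'
  have h1s : (0:ℝ) < 1 - s := by linarith
  have h1s' : (1:ℝ) - s ≠ 0 := h1s.ne'
  have key : r * (r / s - 1) + (1 - r) * ((1 - r) / (1 - s) - 1)
      = (r - s) ^ 2 / (s * (1 - s)) := by
    field_simp
    ring
  calc r * Real.log (r / s) + (1 - r) * Real.log ((1 - r) / (1 - s))
      ≤ r * (r / s - 1) + (1 - r) * ((1 - r) / (1 - s) - 1) := by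
        have := mul_le_mul_of_nonneg_left h1 hr0.le
        have := mul_le_mul_of_nonneg_left h2 (by linarith : (0:ℝ) ≤ 1 - r)
        linarith
    _ = (r - s) ^ 2 / (s * (1 - s)) := key

lemma klP_le_klBer {r s : ℝ} (hr0 : 0 ≤ r) (hr1 : r < 1) (hs0 : 0 ≤ s) (hs1 : s < 1) :
    klP r s ≤ klBer r s := by
  rw [klBer_decomp]
  have hr1' : (0:ℝ) < 1 - r := by linarith
  have hs1' : (0:ℝ) < 1 - s := by linarith
  have := klP_ge hr1' hs1' (by linarith) (by linarith)
  nlinarith [sq_nonneg (1 - r - (1 - s))]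

-- main upper bound: klBer (r*t) (s*t) ≤ t * klP r s + 3*t^2
lemma ub {r s t : ℝ} (hr0 : 0 < r) (hr1 : r ≤ 1) (hs0 : 0 < s) (hs1 : s ≤ 1)
    (ht0 : 0 < t) (ht1 : t ≤ 1/2) :
    klBer (r * t) (s * t) ≤ t * klP r s + 3 * t ^ 2 := by
  unfold klBer klP
  have hrt0 : 0 < r * t := by positivity
  have hst0 : 0 < s * t := by positivity
  have hrt1 : r * t ≤ 1/2 := by nlinarith
  have hst1 : s * t ≤ 1/2 := by nlinarith
  have hlograt : Real.log (r * t / (s * t)) = Real.log (r / s) := by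
    congr 1
    rw [mul_comm r t, mul_comm s t]
    exact mul_div_mul_left r s ht0.ne'
  rw [hlograt]
  -- bound the second term
  have hA : Real.log (1 - r * t) ≤ -(r * t) := by
    have := Real.log_le_sub_one_of_pos (by linarith : (0:ℝ) < 1 - r * t)
    linarith
  have hB : -Real.log (1 - s * t) ≤ s * t + 2 * (s * t) ^ 2 :=
    neg_log_le hst0.le hst1
  have hbr : Real.log ((1 - r * t) / (1 - s * t)) ≤ t * (s - r) + 2 * (s * t) ^ 2 := by
    rw [Real.log_div (by linarith) (by linarith)]
    have : Real.log (1 - r * t) - Real.log (1 - s * t) ≤ -(r*t) + (s*t + 2*(s*t)^2) := by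
      linarith
    linarith [this]
  have hmul : (1 - r * t) * Real.log ((1 - r * t) / (1 - s * t)) ≤
      (1 - r * t) * (t * (s - r) + 2 * (s * t) ^ 2) :=
    mul_le_mul_of_nonneg_left hbr (by linarith)
  have hfin : (1 - r * t) * (t * (s - r) + 2 * (s * t) ^ 2) ≤ t * (s - r) + 3 * t ^ 2 := by
    have key : 2 * s ^ 2 + r * (r - s) - 2 * r * s ^ 2 * t ≤ 3 := by nlinarith
    nlinarith [mul_le_mul_of_nonneg_left key (sq_nonneg t)]
  have : r * t * Real.log (r / s) + (1 - r * t) * Real.log ((1 - r*t)/(1 - s*t)) ≤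
      r * t * Real.log (r / s) + t * (s - r) + 3 * t ^ 2 := by linarith
  calc r * t * Real.log (r / s) + (1 - r * t) * Real.log ((1 - r*t)/(1 - s*t))
      ≤ r * t * Real.log (r / s) + t * (s - r) + 3 * t ^ 2 := this
    _ = t * (r * Real.log (r / s) + s - r) + 3 * t ^ 2 := by ring

lemma klBer_le_neg_log {r s : ℝ} (hr0 : 0 < r) (hrs : r < s) (hs1 : s < 1) :
    klBer r s ≤ -Real.log (1 - s) := by
  unfold klBer
  have hs0 : 0 < s := hr0.trans hrs
  have h1r : 0 < 1 - r := by linarith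
  have h1s : 0 < 1 - s := by linarith
  have emul : Real.log (r * (1 - s) / s) = Real.log r + Real.log (1 - s) - Real.log s := by
    rw [Real.log_div (by positivity) hs0.ne', Real.log_mul hr0.ne' h1s.ne']
  have e : r * Real.log (r / s) + (1 - r) * Real.log ((1 - r) / (1 - s)) - (-Real.log (1 - s))
      = r * Real.log (r * (1 - s) / s) + (1 - r) * Real.log (1 - r) := by
    rw [Real.log_div hr0.ne' hs0.ne', Real.log_div h1r.ne' h1s.ne', emul]
    ring
  have h1 : Real.log (r * (1 - s) / s) ≤ 0 := by
    apply Real.log_nonpos (by positivity)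
    rw [div_le_one hs0]; nlinarith
  have h2 : Real.log (1 - r) ≤ 0 := Real.log_nonpos h1r.le (by linarith)
  nlinarith [mul_le_mul_of_nonneg_left h1 hr0.le,
    mul_le_mul_of_nonneg_left h2 h1r.le]

lemma xexp_le_inv_e {x : ℝ} (hx : 0 ≤ x) : x * Real.exp (-x) ≤ Real.exp (-1) := by
  rw [Real.exp_neg x, Real.exp_neg 1]
  rw [mul_inv_le_iff₀ (Real.exp_pos x), inv_mul_eq_div, le_div_iff₀ (Real.exp_pos 1)]
  calc x * Real.exp 1 ≤ Real.exp (x - 1) * Real.exp 1 := by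
        have : x ≤ Real.exp (x - 1) := by
          have := Real.add_one_le_exp (x - 1); linarith
        nlinarith [Real.exp_pos (1:ℝ), this]
    _ = Real.exp x := by rw [← Real.exp_add]; ring_nf

lemma xexp_le_four_div {x : ℝ} (hx : 0 < x) : x * Real.exp (-x) ≤ 4 / x := by
  have h : x ^ 2 / 4 ≤ Real.exp x := by
    have h2 : (1 + x/2) ≤ Real.exp (x/2) := by have := Real.add_one_le_exp (x/2); linarith
    have := Real.exp_pos (x/2)
    have hsq : Real.exp (x/2) * Real.exp (x/2) = Real.exp x := by
      rw [← Real.exp_add]; ring_nf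
    nlinarith
  rw [Real.exp_neg, mul_inv_le_iff₀ (Real.exp_pos x), div_mul_eq_mul_div,
    le_div_iff₀ hx]
  nlinarith [Real.exp_pos x]
lemma klP_le_mul_klBer {α s : ℝ} (hα0 : 0 < α) (hα1 : α < 1) (hs0 : 0 < s) (hs1 : s < 1) :
    klP α s ≤ (1 - s * (1 - s) / 2) * klBer α s := by
  have hd := klBer_decomp (r := α) (s := s)
  have hgap : ((1-α) - (1-s)) ^ 2 / 2 ≤ klP (1-α) (1-s) :=
    klP_ge (by linarith) (by linarith) (by linarith) (by linarith)
  have hchi := chi2 hα0 hα1 hs0 hs1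
  have hss : 0 < s * (1 - s) := by nlinarith
  have hchi' : s * (1 - s) * klBer α s ≤ (α - s) ^ 2 := by
    rw [le_div_iff₀ hss] at hchi; nlinarith
  nlinarith [klBer_ge_sq hα0 hα1 hs0 hs1]

lemma kl_scaled_le {α s t k d : ℝ} (hα0 : 0 < α) (hα1 : α ≤ 1) (hs0 : 0 < s) (hs1 : s ≤ 1)
    (ht0 : 0 < t) (ht1 : t ≤ 1/2) (hk0 : 0 ≤ k) (hkt : k * t = d) :
    k * klBer (α * t) (s * t) ≤ d * klP α s + 3 * (d * t) := by
  have h := ub hα0 hα1 hs0 hs1 ht0 ht1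
  have h2 := mul_le_mul_of_nonneg_left h hk0
  calc k * klBer (α * t) (s * t) ≤ k * (t * klP α s + 3 * t ^ 2) := h2
    _ = d * klP α s + 3 * (d * t) := by rw [← hkt]; ring

lemma inv_le_inv_helper {X Y δ : ℝ} (hδ0 : 0 ≤ δ) (hδ1 : δ < 1) (hX : 0 < X)
    (hY : X ≤ (1 - δ) * Y) : (1 + δ) * (1 / Y) ≤ 1 / X := by
  have hY0 : 0 < Y := by nlinarith
  rw [mul_one_div, div_le_div_iff₀ hY0 hX]
  nlinarith [mul_le_mul_of_nonneg_left hY (by linarith : (0:ℝ) ≤ 1 + δ), mul_nonneg (mul_nonneg hδ0 hδ0) hY0.le]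

lemma le_mul_one_div {X p m : ℝ} (hX : 0 < X) (hp : 0 < p) (hm : 0 < m)
    (hXb : X ≤ p / m) : m ≤ p * (1 / X) := by
  rw [mul_one_div, le_div_iff₀ hX]
  calc m * X ≤ m * (p / m) := by exact mul_le_mul_of_nonneg_left hXb hm.le
    _ = p := by field_simp

lemma neg_log_le_div {c lo : ℝ} (hc0 : 0 < c) (hc1 : c < 1) (hlo : 0 < lo)
    (h : lo ≤ 1 - c) : -Real.log (1 - c) ≤ c / lo := by
  have h1c : (0:ℝ) < 1 - c := by linarith
  have := Real.one_sub_inv_le_log_of_pos h1c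
  have h2 : -Real.log (1 - c) ≤ (1 - c)⁻¹ - 1 := by linarith
  have h3 : (1 - c)⁻¹ - 1 = c / (1 - c) := by field_simp; ring
  have h4 : c / (1 - c) ≤ c / lo := div_le_div_of_nonneg_left hc0.le hlo h
  linarith [h2.trans_eq h3]

-- lower bound for every element of ddSetZ
lemma ddSetZ_ge {q θ x : ℝ} (hq0 : 0 < q) (hq1 : q < 1) (hθ0 : 0 < θ) (hθ1 : θ < 1)
    (hx : x ∈ ddSetZ θ q) : θ / (1 - θ) * (q / (Real.exp (-1) * (1 - q))) ≤ x := by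
  obtain ⟨d, α, hd, hα, hxeq⟩ := hx
  set c := Real.exp (-d) * (1 - q) with hc
  have hc0 : 0 < c := mul_pos (Real.exp_pos _) (by linarith)
  have hed1 : Real.exp (-d) < 1 := Real.exp_lt_one_iff.2 (by linarith)
  have hc1q : c ≤ 1 - q := by
    rw [hc]; nlinarith [Real.exp_pos (-d)]
  have hc1 : c < 1 := by linarith
  have hlogneg : Real.log (1 - c) < 0 := Real.log_neg (by linarith) (by linarith)
  have hX0 : 0 < -d * Real.log (1 - c) := by nlinarith
  have hpref : 0 ≤ θ / (1 - θ) := by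
    apply div_nonneg hθ0.le; linarith
  have hXle : -d * Real.log (1 - c) ≤ Real.exp (-1) * (1 - q) / q := by
    have h1 : -Real.log (1 - c) ≤ c / q := neg_log_le_div hc0 hc1 hq0 (by linarith)
    have hde : d * Real.exp (-d) ≤ Real.exp (-1) := xexp_le_inv_e hd.le
    have h5 : d * Real.exp (-d) * (1 - q) ≤ Real.exp (-1) * (1 - q) :=
      mul_le_mul_of_nonneg_right hde (by linarith)
    have h6 : -d * Real.log (1 - c) ≤ d * (c / q) := by nlinarith
    have h7 : d * (c / q) = d * Real.exp (-d) * (1 - q) / q := by rw [hc]; ring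
    have h8 : d * Real.exp (-d) * (1 - q) / q ≤ Real.exp (-1) * (1 - q) / q :=
      (div_le_div_iff_of_pos_right hq0).mpr h5
    linarith [h6.trans_eq h7]
  have hU : 1 / (Real.exp (-1) * (1 - q) / q) = q / (Real.exp (-1) * (1 - q)) := by
    rw [one_div_div]
  have hmono := one_div_le_one_div_of_le hX0 hXle
  rw [hU] at hmono
  have hfin : θ / (1 - θ) * (q / (Real.exp (-1) * (1 - q))) ≤
      θ / (1 - θ) * (1 / (-d * Real.log (1 - c))) := mul_le_mul_of_nonneg_left hmono hpref
  rw [hxeq]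
  exact hfin.trans (le_max_right _ _)
lemma ddSetZ_mem (q θ : ℝ) (hq0 : 0 < q) (hq1 : q < 1) :
    (max (max (θ / (1 - θ) * (1 / (1 * klBer (q + Real.exp (-1) * (1 - q) / 2) q)))
        (1 / (1 * klBer (q + Real.exp (-1) * (1 - q) / 2)
          (Real.exp (-1) + (1 - Real.exp (-1)) * q))))
      (θ / (1 - θ) * (1 / (-1 * Real.log (1 - Real.exp (-1) * (1 - q)))))) ∈ ddSetZ θ q := by
  refine ⟨1, q + Real.exp (-1) * (1 - q) / 2, one_pos, ⟨?_, ?_⟩, by norm_num⟩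
  · nlinarith [Real.exp_pos (-1)]
  · nlinarith [Real.exp_pos (-1)]

lemma ddSetZBer_mem (q θ : ℝ) (k : ℕ) (hq0 : 0 < q) (hq1 : q < 1) (hθ0 : 0 < θ) :
    ∃ y, y ∈ ddSetZBer θ q k := by
  refine ⟨_, θ/2, 1, q + Real.exp (-1) * (1 - q) / 2, Real.exp (-1) * (1 - q) / 2,
    by linarith, by linarith, one_pos, ⟨?_, ?_⟩, ⟨?_, ?_⟩, rfl⟩
  · nlinarith [Real.exp_pos (-1)]
  · nlinarith [Real.exp_pos (-1)]
  · nlinarith [Real.exp_pos (-1)]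
  · nlinarith [Real.exp_pos (-1)]

set_option maxHeartbeats 2000000 in
lemma ber_lb (q θ : ℝ) (hq0 : 0 < q) (hq1 : q < 1) (hθ0 : 0 < θ) (hθ1 : θ < 1) :
    ∃ ε > 0, ∃ K : ℕ, 1 ≤ K ∧ ∀ k : ℕ, K ≤ k → ∀ x ∈ ddSetZBer θ q k,
      sInf (ddSetZ θ q) + ε ≤ x := by
  have h1θ : (0:ℝ) < 1 - θ := by linarith
  have h1q : (0:ℝ) < 1 - q := by linarith
  set pref := θ / (1 - θ) with hprefdef
  have hpref : 0 < pref := div_pos hθ0 h1θ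
  set c₀ := pref * (q / (Real.exp (-1) * (1 - q))) with hc₀def
  have hc₀ : 0 < c₀ := mul_pos hpref (div_pos hq0 (mul_pos (Real.exp_pos _) h1q))
  have hSne : (ddSetZ θ q).Nonempty := ⟨_, ddSetZ_mem q θ hq0 hq1⟩
  have hSbdd : BddBelow (ddSetZ θ q) :=
    ⟨c₀, fun x hx => ddSetZ_ge hq0 hq1 hθ0 hθ1 hx⟩
  set m := sInf (ddSetZ θ q) with hmdef
  have hm_lb : c₀ ≤ m := le_csInf hSne (fun x hx => ddSetZ_ge hq0 hq1 hθ0 hθ1 hx)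
  obtain ⟨M₀, hM₀⟩ := hSne
  have hmM : m ≤ M₀ := csInf_le hSbdd hM₀
  set M' := max M₀ 1 with hM'def
  have hM'1 : 1 ≤ M' := le_max_right _ _
  have hmM' : m ≤ M' := hmM.trans (le_max_left _ _)
  have hM'pos : (0:ℝ) < M' + 1 := by linarith
  set A := pref / (2 * (1 - q)) with hAdef
  have hA : 0 < A := div_pos hpref (by linarith)
  set B := A / (M' + 1) with hBdef
  have hB : 0 < B := div_pos hA hM'pos
  set D := 4 / B with hDdef
  have hD : 0 < D := by positivity
  set γ := q * (1 - q) * (1 - Real.exp (-B)) with hγdef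
  have hexpB : Real.exp (-B) < 1 := Real.exp_lt_one_iff.2 (by linarith)
  have hγ : 0 < γ := mul_pos (mul_pos hq0 h1q) (by linarith)
  have hq14 : q * (1 - q) ≤ 1 / 4 := by nlinarith [sq_nonneg (q - (1 - q))]
  have hγq : γ ≤ q * (1 - q) := by nlinarith [Real.exp_pos (-B)]
  have hγ4 : γ ≤ 1 / 4 := hγq.trans hq14
  set c₁ := Real.exp (-D) * (1 - q) with hc₁def
  have hc₁ : 0 < c₁ := mul_pos (Real.exp_pos _) h1q
  have hc₁1 : c₁ < 1 := by nlinarith [Real.exp_lt_one_iff.2 (neg_neg_iff_pos.2 hD)]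
  set P := min pref 1 with hPdef
  have hP0 : 0 < P := lt_min hpref one_pos
  have hP1 : P ≤ 1 := min_le_right _ _
  set ε₀ := P / (4 * D * (M' + 1)) with hε₀def
  have hε₀ : 0 < ε₀ := div_pos hP0 (by positivity)
  set η := min (min (1/2) (c₁/16)) (min (ε₀*γ/12) (ε₀/4)) with hηdef
  have hη : 0 < η := lt_min (lt_min (by norm_num) (by positivity)) (lt_min (by positivity) (by positivity))
  have hη12 : η ≤ 1/2 := le_trans (min_le_left _ _) (min_le_left _ _)
  have hηc₁ : η ≤ c₁/16 := le_trans (min_le_left _ _) (min_le_right _ _)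
  have hηεγ : η ≤ ε₀*γ/12 := le_trans (min_le_right _ _) (min_le_left _ _)
  have hηε : η ≤ ε₀/4 := le_trans (min_le_right _ _) (min_le_right _ _)
  set δ₃ := c₁ / 8 with hδ₃def
  set δs := min (γ/4) δ₃ with hδsdef
  have hδs : 0 < δs := lt_min (by positivity) (by positivity)
  have hδsγ : δs ≤ γ/4 := min_le_left _ _
  have hδs1 : δs < 1 := lt_of_le_of_lt hδsγ (by nlinarith)
  refine ⟨min 1 (δs * c₀), lt_min one_pos (mul_pos hδs hc₀), ⌈D/η⌉₊ + 1, Nat.le_add_left 1 _, ?_⟩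
  intro k hk x hx
  obtain ⟨ζ, d, α, β, hζ0, hζθ, hd, hα, hβ, hxeq⟩ := hx
  have hk1 : 1 ≤ k := le_trans (Nat.le_add_left 1 _) hk
  have hkR : (1:ℝ) ≤ (k:ℝ) := by exact_mod_cast hk1
  have hk0 : (0:ℝ) < (k:ℝ) := by linarith only [hkR]
  have hed0 : 0 < Real.exp (-d) := Real.exp_pos _
  have hed1 : Real.exp (-d) < 1 := Real.exp_lt_one_iff.2 (by linarith only [hd])
  set c := Real.exp (-d) * (1 - q) with hcdef
  have hc0 : 0 < c := mul_pos hed0 h1q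
  have hcq : c < 1 - q := by rw [hcdef]; exact mul_lt_of_lt_one_left h1q hed1
  have hc1 : c < 1 := by linarith only [hcq, hq0]
  have hs₂eq : Real.exp (-d) + (1 - Real.exp (-d)) * q = q + c := by rw [hcdef]; ring
  rw [hs₂eq] at hα hxeq
  obtain ⟨hαq, hαs⟩ := hα
  obtain ⟨hβ0, hβc⟩ := hβ
  have hα0 : 0 < α := hq0.trans hαq
  have hα1 : α < 1 := by linarith only [hαs, hcq]
  have hs₂0 : 0 < q + c := by linarith only [hq0, hc0]
  have hs₂1 : q + c < 1 := by linarith only [hcq]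
  set t := d / (k:ℝ) with htdef
  have ht0 : 0 < t := div_pos hd hk0
  have hkt : (k:ℝ) * t = d := by rw [htdef]; field_simp
  simp only [mul_div_assoc] at hxeq
  have hde : d * Real.exp (-d) ≤ Real.exp (-1) := xexp_le_inv_e hd.le
  have hexp1half : Real.exp (-1) ≤ 1/2 := by
    have h2e : (2:ℝ) ≤ Real.exp 1 := by
      have := Real.add_one_le_exp 1; linarith only [this]
    rw [Real.exp_neg, inv_le_comm₀ (Real.exp_pos 1) (by norm_num)]
    linarith only [h2e]
  have hcteq : c * t = d * Real.exp (-d) * (1 - q) / (k:ℝ) := by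
    rw [hcdef, htdef]; ring
  have hct12 : c * t ≤ 1/2 := by
    rw [hcteq, div_le_iff₀ hk0]
    have hXq : 0 ≤ d * Real.exp (-d) * q := by positivity
    nlinarith only [hde, hexp1half, hXq, hkR, mul_nonneg hd.le hed0.le]
  have hct0 : 0 < c * t := mul_pos hc0 ht0
  have hβt0 : 0 < β * t := mul_pos hβ0 ht0
  have hβtct : β * t < c * t := mul_lt_mul_of_pos_right hβc ht0
  have hct1 : c * t < 1 := by linarith only [hct12]
  have hden3pos : 0 < (k:ℝ) * klBer (β * t) (c * t) :=
    mul_pos hk0 (klBer_pos hβt0 (by linarith only [hβtct, hct1]) hct0 hct1 hβtct.ne)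
  have hkct : (k:ℝ) * (c * t) = c * d := by rw [← hkt]; ring
  have hden3le : (k:ℝ) * klBer (β * t) (c * t) ≤ 2 * (1 - q) * (d * Real.exp (-d)) := by
    have h3a : klBer (β * t) (c * t) ≤ -Real.log (1 - c * t) :=
      klBer_le_neg_log hβt0 hβtct hct1
    have h3b : -Real.log (1 - c * t) ≤ c * t + 2 * (c * t) ^ 2 := neg_log_le hct0.le hct12
    have h3c : (k:ℝ) * klBer (β * t) (c * t) ≤ (k:ℝ) * (c * t + 2 * (c * t) ^ 2) :=
      mul_le_mul_of_nonneg_left (h3a.trans h3b) hk0.le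
    have h3d : (k:ℝ) * (c * t + 2 * (c * t) ^ 2) = c * d + 2 * (c * d) * (c * t) := by
      rw [← hkct]; ring
    have h3e' : (c * d) * (c * t) ≤ (c * d) * (1/2) :=
      mul_le_mul_of_nonneg_left hct12 (mul_nonneg hc0.le hd.le)
    have h3f : 2 * (c * d) = 2 * (1 - q) * (d * Real.exp (-d)) := by rw [hcdef]; ring
    linarith only [h3c, h3d, h3e', h3f]
  rcases le_or_gt (d * Real.exp (-d)) B with hcase | hcase
  · -- d * exp(-d) small : third term is huge
    have h2B : 2 * (1 - q) * B = pref / (M' + 1) := by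
      rw [hBdef, hAdef]; field_simp
    have hden3le2 : (k:ℝ) * klBer (β * t) (c * t) ≤ pref / (M' + 1) := by
      rw [← h2B]
      have := mul_le_mul_of_nonneg_left hcase (by linarith only [h1q] : (0:ℝ) ≤ 2 * (1 - q))
      linarith only [hden3le, this]
    have hT3 : M' + 1 ≤ pref * (1 / ((k:ℝ) * klBer (β * t) (c * t))) :=
      le_mul_one_div hden3pos hpref hM'pos hden3le2
    have hxT3 : pref * (1 / ((k:ℝ) * klBer (β * t) (c * t))) ≤ x := by
      rw [hxeq, hprefdef]; exact le_max_right _ _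
    have hmin := min_le_left (1:ℝ) (δs * c₀)
    linarith only [hT3, hxT3, hmM', hmin]
  · -- moderate d
    have hdB : B < d :=
      lt_of_lt_of_le hcase (mul_le_of_le_one_right hd.le hed1.le)
    have hdD : d < D := by
      have h4d := xexp_le_four_div hd
      have hB4 : B < 4 / d := lt_of_lt_of_le hcase h4d
      rw [lt_div_iff₀ hd] at hB4
      rw [hDdef, lt_div_iff₀ hB, mul_comm]
      linarith only [hB4]
    have hkD : D / η < (k:ℝ) := by
      have h1 : D / η ≤ (⌈D/η⌉₊ : ℝ) := Nat.le_ceil _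
      have h2 : ((⌈D/η⌉₊ + 1 : ℕ) : ℝ) ≤ (k:ℝ) := by exact_mod_cast hk
      push_cast at h2
      linarith only [h1, h2]
    have htη : t < η := by
      rw [htdef, div_lt_iff₀ hk0]
      rw [div_lt_iff₀ hη] at hkD
      linarith only [hkD, hdD, mul_comm η (k:ℝ)]
    have ht12 : t ≤ 1/2 := by linarith only [htη, hη12]
    have hαt1 : α * t < 1 := by
      have := mul_le_mul_of_nonneg_left ht12 hα0.le
      linarith only [this, hα1, hα0]
    have hqt1 : q * t < 1 := by
      have := mul_le_mul_of_nonneg_left ht12 hq0.le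
      linarith only [this, hq1, hq0]
    have hs₂t1 : (q + c) * t < 1 := by
      have := mul_le_mul_of_nonneg_left ht12 hs₂0.le
      linarith only [this, hs₂1, hs₂0]
    have hden1pos : 0 < (k:ℝ) * klBer (α * t) (q * t) :=
      mul_pos hk0 (klBer_pos (mul_pos hα0 ht0) hαt1 (mul_pos hq0 ht0)
        hqt1 (mul_lt_mul_of_pos_right hαq ht0).ne')
    have hden2pos : 0 < (k:ℝ) * klBer (α * t) ((q + c) * t) :=
      mul_pos hk0 (klBer_pos (mul_pos hα0 ht0) hαt1 (mul_pos hs₂0 ht0)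
        hs₂t1 (mul_lt_mul_of_pos_right hαs ht0).ne)
    have hkl1pos : 0 < klBer α q := klBer_pos hα0 hα1 hq0 hq1 hαq.ne'
    have hkl2pos : 0 < klBer α (q + c) := klBer_pos hα0 hα1 hs₂0 hs₂1 hαs.ne
    have hden1UB : (k:ℝ) * klBer (α * t) (q * t) ≤ d * klP α q + 3 * (d * t) :=
      kl_scaled_le hα0 hα1.le hq0 hq1.le ht0 ht12 hk0.le hkt
    have hden2UB : (k:ℝ) * klBer (α * t) ((q + c) * t) ≤ d * klP α (q + c) + 3 * (d * t) :=
      kl_scaled_le hα0 hα1.le hs₂0 hs₂1.le ht0 ht12 hk0.le hkt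
    have hklP1 : klP α q ≤ klBer α q := klP_le_klBer hα0.le hα1 hq0.le hq1
    have hklP2 : klP α (q + c) ≤ klBer α (q + c) := klP_le_klBer hα0.le hα1 hs₂0.le hs₂1
    have hklP1nn : 0 ≤ klP α q := le_trans (by positivity) (klP_ge hα0 hq0 hα1.le hq1.le)
    have hklP2nn : 0 ≤ klP α (q + c) :=
      le_trans (by positivity) (klP_ge hα0 hs₂0 hα1.le hs₂1.le)
    have h4Dε : 4 * D * ε₀ = P / (M' + 1) := by
      rw [hε₀def]; field_simp
    have hdtDη : d * t ≤ D * η := by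
      nlinarith only [hdD, htη, hd, ht0, hη, hD]
    have hsmallbound : ∀ Y : ℝ, Y ≤ ε₀ → 0 ≤ Y →
        d * Y + 3 * (d * t) ≤ P / (M' + 1) := by
      intro Y hY hY0
      have ha1 : d * Y ≤ d * ε₀ := mul_le_mul_of_nonneg_left hY hd.le
      have ha2 : d * ε₀ ≤ D * ε₀ := mul_le_mul_of_nonneg_right hdD.le hε₀.le
      have ha3 : D * η ≤ D * (ε₀/4) := mul_le_mul_of_nonneg_left hηε hD.le
      rw [← h4Dε]
      have ha4 : 0 ≤ D * ε₀ := mul_nonneg hD.le hε₀.le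
      nlinarith only [ha1, ha2, ha3, ha4, hdtDη]
    have hPp : P / (M' + 1) ≤ pref / (M' + 1) := by
      rw [div_le_div_iff₀ hM'pos hM'pos]
      have hPle : P ≤ pref := min_le_left _ _
      nlinarith only [hPle, hM'pos]
    have hP1' : P / (M' + 1) ≤ 1 / (M' + 1) := by
      rw [div_le_div_iff₀ hM'pos hM'pos]
      nlinarith only [hP1, hM'pos]
    have hmin := min_le_left (1:ℝ) (δs * c₀)
    rcases le_or_gt (klBer α q) ε₀ with hsm1 | hbig1
    · have hle : (k:ℝ) * klBer (α * t) (q * t) ≤ pref / (M' + 1) := by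
        have h5 := hsmallbound (klP α q) (le_trans hklP1 hsm1) hklP1nn
        linarith only [hden1UB, h5, hPp]
      have hT1 : M' + 1 ≤ pref * (1 / ((k:ℝ) * klBer (α * t) (q * t))) :=
        le_mul_one_div hden1pos hpref hM'pos hle
      have hxT1 : pref * (1 / ((k:ℝ) * klBer (α * t) (q * t))) ≤ x := by
        rw [hxeq, hprefdef]; exact le_trans (le_max_left _ _) (le_max_left _ _)
      linarith only [hT1, hxT1, hmM', hmin]
    · rcases le_or_gt (klBer α (q + c)) ε₀ with hsm2 | hbig2
      · have hle : (k:ℝ) * klBer (α * t) ((q + c) * t) ≤ 1 / (M' + 1) := by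
          have h5 := hsmallbound (klP α (q + c)) (le_trans hklP2 hsm2) hklP2nn
          linarith only [hden2UB, h5, hP1']
        have hT2 : M' + 1 ≤ 1 * (1 / ((k:ℝ) * klBer (α * t) ((q + c) * t))) :=
          le_mul_one_div hden2pos one_pos hM'pos hle
        have hpre2 : 1 ≤ (1 - ζ) / (1 - θ) := by
          rw [le_div_iff₀ h1θ]; linarith only [hζθ]
        have hT2' : 1 * (1 / ((k:ℝ) * klBer (α * t) ((q + c) * t))) ≤
            (1 - ζ) / (1 - θ) * (1 / ((k:ℝ) * klBer (α * t) ((q + c) * t))) :=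
          mul_le_mul_of_nonneg_right hpre2 (by positivity)
        have hxT2 : (1 - ζ) / (1 - θ) * (1 / ((k:ℝ) * klBer (α * t) ((q + c) * t))) ≤ x := by
          rw [hxeq]; exact le_trans (le_max_right _ _) (le_max_left _ _)
        linarith only [hT2, hT2', hxT2, hmM', hmin]
      · -- main case : each Bernoulli term beats (1+δs) times the matching constant term
        have hγ40 : (0:ℝ) ≤ γ/4 := by positivity
        have hγ41 : γ/4 < 1 := by linarith only [hγ4]
        -- Term 1
        have hgap1 : klP α q ≤ (1 - q*(1-q)/2) * klBer α q := klP_le_mul_klBer hα0 hα1 hq0 hq1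
        have e1 : klP α q ≤ (1 - γ/2) * klBer α q := by
          nlinarith only [hgap1, mul_nonneg (sub_nonneg.2 hγq) hkl1pos.le]
        have e2 : 3 * t ≤ (γ/4) * klBer α q := by
          nlinarith only [htη, hηεγ, mul_nonneg hγ.le (sub_nonneg.2 hbig1.le)]
        have hden1c : (k:ℝ) * klBer (α * t) (q * t) ≤ (1 - γ/4) * (d * klBer α q) := by
          have e3a := mul_le_mul_of_nonneg_left e1 hd.le
          have e3b := mul_le_mul_of_nonneg_left e2 hd.le
          nlinarith only [hden1UB, e3a, e3b]
        have hinv1 := inv_le_inv_helper hγ40 hγ41 hden1pos hden1c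
        have hS1nn : 0 ≤ pref * (1/(d * klBer α q)) := by positivity
        have hT1 : (1+δs) * (pref * (1/(d * klBer α q))) ≤
            pref * (1 / ((k:ℝ) * klBer (α * t) (q * t))) := by
          have h6 := mul_le_mul_of_nonneg_left hinv1 hpref.le
          have h7 : (1+δs) * (pref * (1/(d * klBer α q))) ≤
              (1+γ/4) * (pref * (1/(d * klBer α q))) :=
            mul_le_mul_of_nonneg_right (by linarith only [hδsγ]) hS1nn
          calc (1+δs) * (pref * (1/(d * klBer α q)))
              ≤ (1+γ/4) * (pref * (1/(d * klBer α q))) := h7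
            _ = pref * ((1+γ/4) * (1/(d * klBer α q))) := by ring
            _ ≤ pref * (1 / ((k:ℝ) * klBer (α * t) (q * t))) := h6
        -- Term 2
        have hexpdB : Real.exp (-d) ≤ Real.exp (-B) := Real.exp_le_exp.2 (by linarith only [hdB])
        have hγs₂ : γ ≤ (q+c)*(1-(q+c)) := by
          have e5 : 1 - (q+c) = (1-q)*(1 - Real.exp (-d)) := by rw [hcdef]; ring
          rw [e5, hγdef]
          have p1 : (1-q)*(1-Real.exp (-B)) ≤ (1-q)*(1-Real.exp (-d)) :=
            mul_le_mul_of_nonneg_left (by linarith only [hexpdB]) h1q.le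
          have p2 : q*((1-q)*(1-Real.exp (-B))) ≤ q*((1-q)*(1-Real.exp (-d))) :=
            mul_le_mul_of_nonneg_left p1 hq0.le
          have p3 : q*((1-q)*(1-Real.exp (-d))) ≤ (q+c)*((1-q)*(1-Real.exp (-d))) :=
            mul_le_mul_of_nonneg_right (by linarith only [hc0])
              (mul_nonneg h1q.le (by linarith only [hed1]))
          nlinarith only [p2, p3]
        have hgap2 : klP α (q+c) ≤ (1 - (q+c)*(1-(q+c))/2) * klBer α (q+c) :=
          klP_le_mul_klBer hα0 hα1 hs₂0 hs₂1
        have e1' : klP α (q+c) ≤ (1 - γ/2) * klBer α (q+c) := by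
          nlinarith only [hgap2, mul_nonneg (sub_nonneg.2 hγs₂) hkl2pos.le]
        have e2' : 3 * t ≤ (γ/4) * klBer α (q+c) := by
          nlinarith only [htη, hηεγ, mul_nonneg hγ.le (sub_nonneg.2 hbig2.le)]
        have hden2c : (k:ℝ) * klBer (α * t) ((q+c) * t) ≤ (1 - γ/4) * (d * klBer α (q+c)) := by
          have e3a := mul_le_mul_of_nonneg_left e1' hd.le
          have e3b := mul_le_mul_of_nonneg_left e2' hd.le
          nlinarith only [hden2UB, e3a, e3b]
        have hinv2 := inv_le_inv_helper hγ40 hγ41 hden2pos hden2c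
        have hS2nn : 0 ≤ 1/(d * klBer α (q+c)) := by positivity
        have hpre2 : 1 ≤ (1 - ζ) / (1 - θ) := by
          rw [le_div_iff₀ h1θ]; linarith only [hζθ]
        have hT2 : (1+δs) * (1/(d * klBer α (q+c))) ≤
            (1 - ζ) / (1 - θ) * (1 / ((k:ℝ) * klBer (α * t) ((q+c) * t))) := by
          have h8 : (1:ℝ) * (1 / ((k:ℝ) * klBer (α * t) ((q+c) * t))) ≤
              (1 - ζ) / (1 - θ) * (1 / ((k:ℝ) * klBer (α * t) ((q+c) * t))) :=
            mul_le_mul_of_nonneg_right hpre2 (by positivity)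
          have h7' : (1+δs) * (1/(d * klBer α (q+c))) ≤
              (1+γ/4) * (1/(d * klBer α (q+c))) :=
            mul_le_mul_of_nonneg_right (by linarith only [hδsγ]) hS2nn
          calc (1+δs) * (1/(d * klBer α (q+c)))
              ≤ (1+γ/4) * (1/(d * klBer α (q+c))) := h7'
            _ ≤ 1 / ((k:ℝ) * klBer (α * t) ((q+c) * t)) := hinv2
            _ = 1 * (1 / ((k:ℝ) * klBer (α * t) ((q+c) * t))) := (one_mul _).symm
            _ ≤ (1 - ζ) / (1 - θ) * (1 / ((k:ℝ) * klBer (α * t) ((q+c) * t))) := h8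
        -- Term 3
        have hc₁c : c₁ ≤ c := by
          rw [hc₁def, hcdef]
          exact mul_le_mul_of_nonneg_right (Real.exp_le_exp.2 (by linarith only [hdD])) h1q.le
        have hlog1c : Real.log (1 - c) < 0 :=
          Real.log_neg (by linarith only [hc1]) (by linarith only [hc0])
        have hY3pos : 0 < -d * Real.log (1 - c) := by nlinarith only [hlog1c, hd]
        have hY3ge : d * c * (1 + c₁/2) ≤ -d * Real.log (1 - c) := by
          have h9 := neg_log_ge hc0.le hc1
          have h10 : c * c₁ ≤ c * c := mul_le_mul_of_nonneg_left hc₁c hc0.le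
          have h11 : c + c * c₁ / 2 ≤ -Real.log (1 - c) := by nlinarith only [h9, h10]
          have h12 := mul_le_mul_of_nonneg_left h11 hd.le
          nlinarith only [h12]
        have hctη : c * t ≤ η := by
          have := mul_lt_of_lt_one_left ht0 hc1
          linarith only [this, htη]
        have hden3c : (k:ℝ) * klBer (β * t) (c * t) ≤ (1 - δ₃) * (-d * Real.log (1 - c)) := by
          have h3a' : klBer (β * t) (c * t) ≤ -Real.log (1 - c * t) :=
            klBer_le_neg_log hβt0 hβtct hct1
          have h3b' := neg_log_le hct0.le hct12
          have h3c' : (k:ℝ) * klBer (β * t) (c * t) ≤ (k:ℝ) * (c * t + 2 * (c * t) ^ 2) :=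
            mul_le_mul_of_nonneg_left (h3a'.trans h3b') hk0.le
          have h3d' : (k:ℝ) * (c * t + 2 * (c * t) ^ 2) = c * d + 2 * (c * d) * (c * t) := by
            rw [← hkct]; ring
          have h13 : 2 * (c * d) * (c * t) ≤ 2 * (c * d) * η := by
            have := mul_le_mul_of_nonneg_left hctη (mul_nonneg hc0.le hd.le)
            nlinarith only [this]
          have hη8 : 2 * η ≤ c₁ / 8 := by linarith only [hηc₁]
          have h14 : c * d + 2 * (c * d) * η ≤ c * d * (1 + c₁/8) := by
            have := mul_le_mul_of_nonneg_left hη8 (mul_nonneg hc0.le hd.le)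
            nlinarith only [this]
          have h15 : c * d * (1 + c₁/8) ≤ (1 - δ₃) * (d * c * (1 + c₁/2)) := by
            rw [hδ₃def]
            nlinarith only [mul_nonneg (mul_nonneg (mul_nonneg hc0.le hd.le) hc₁.le)
              (by linarith only [hc₁1] : (0:ℝ) ≤ 4 - c₁)]
          have h16 : (1 - δ₃) * (d * c * (1 + c₁/2)) ≤ (1 - δ₃) * (-d * Real.log (1 - c)) := by
            apply mul_le_mul_of_nonneg_left hY3ge
            rw [hδ₃def]; linarith only [hc₁1]
          linarith only [h3c', h3d', h13, h14, h15, h16]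
        have hδ₃0 : (0:ℝ) ≤ δ₃ := by rw [hδ₃def]; positivity
        have hδ₃1 : δ₃ < 1 := by rw [hδ₃def]; linarith only [hc₁1]
        have hinv3 := inv_le_inv_helper hδ₃0 hδ₃1 hden3pos hden3c
        have hS3nn : 0 ≤ pref * (1/(-d * Real.log (1 - c))) := by positivity
        have hδsδ₃ : δs ≤ δ₃ := min_le_right _ _
        have hT3 : (1+δs) * (pref * (1/(-d * Real.log (1 - c)))) ≤
            pref * (1 / ((k:ℝ) * klBer (β * t) (c * t))) := by
          have h6'' := mul_le_mul_of_nonneg_left hinv3 hpref.le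
          have h7'' : (1+δs) * (pref * (1/(-d * Real.log (1 - c)))) ≤
              (1+δ₃) * (pref * (1/(-d * Real.log (1 - c)))) :=
            mul_le_mul_of_nonneg_right (by linarith only [hδsδ₃]) hS3nn
          calc (1+δs) * (pref * (1/(-d * Real.log (1 - c))))
              ≤ (1+δ₃) * (pref * (1/(-d * Real.log (1 - c)))) := h7''
            _ = pref * ((1+δ₃) * (1/(-d * Real.log (1 - c)))) := by ring
            _ ≤ pref * (1 / ((k:ℝ) * klBer (β * t) (c * t))) := h6''
        -- assemble
        set y := max (max (pref * (1/(d * klBer α q))) (1/(d * klBer α (q+c))))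
          (pref * (1/(-d * Real.log (1 - c)))) with hydef
        have hyS : y ∈ ddSetZ θ q := by
          refine ⟨d, α, hd, ⟨hαq, ?_⟩, ?_⟩
          · rw [hs₂eq]; exact hαs
          · rw [hydef, hs₂eq, ← hcdef, ← hprefdef]
        have hym : m ≤ y := csInf_le hSbdd hyS
        have hyc₀ : c₀ ≤ y := by
          have := ddSetZ_ge hq0 hq1 hθ0 hθ1 hyS
          exact le_trans (le_of_eq (by rw [hc₀def, hprefdef])) this
        have h1δs : (0:ℝ) ≤ 1 + δs := by linarith only [hδs]
        have hfinal : (1+δs) * y ≤ x := by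
          rw [hxeq, hydef, mul_max_of_nonneg _ _ h1δs, mul_max_of_nonneg _ _ h1δs,
            hprefdef]
          exact max_le_max (max_le_max hT1 hT2) hT3
        have hδsy := mul_le_mul_of_nonneg_left hyc₀ hδs.le
        have hmin2 := min_le_right (1:ℝ) (δs * c₀)
        nlinarith only [hfinal, hym, hδsy, hmin2]

/-- **Constant-column strictly beats Bernoulli for DD on the Z channel**
(Proposition 2.16).  For all sufficiently large `n`, `m_DD^Ber(n,θ,0,q) > m_DD(n,θ,0,q)`. -/
theorem dd_Bernoulli_gt_constantColumn_Z
    (q θ : ℝ) (hq0 : 0 < q) (hq1 : q < 1) (hθ0 : 0 < θ) (hθ1 : θ < 1) :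
    ∀ᶠ n : ℕ in atTop, mDDZ n θ q < mDDZBer n θ q := by

  obtain ⟨ε, hε, K, hK1, hbound⟩ := ber_lb q θ hq0 hq1 hθ0 hθ1
  have htendθ : Tendsto (fun n : ℕ => ((n:ℝ)) ^ θ) atTop atTop :=
    (tendsto_rpow_atTop hθ0).comp tendsto_natCast_atTop_atTop
  have htend1θ : Tendsto (fun n : ℕ => ((n:ℝ)) ^ (1 - θ)) atTop atTop :=
    (tendsto_rpow_atTop (by linarith)).comp tendsto_natCast_atTop_atTop
  filter_upwards [htendθ.eventually_ge_atTop (K:ℝ), htend1θ.eventually_ge_atTop 2,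
    eventually_ge_atTop 1] with n h1 h2 h3
  have hn1R : (1:ℝ) ≤ (n:ℝ) := by exact_mod_cast h3
  have hn0 : (0:ℝ) < (n:ℝ) := by linarith
  have hnθ1 : (1:ℝ) ≤ (n:ℝ) ^ θ := Real.one_le_rpow hn1R hθ0.le
  set k := ⌈(n:ℝ) ^ θ⌉₊ with hkdef
  have hkK : K ≤ k := by
    have hx : (K:ℝ) ≤ (k:ℝ) := le_trans h1 (Nat.le_ceil _)
    exact_mod_cast hx
  have hk1 : 1 ≤ k := le_trans hK1 hkK
  have hkpos : (0:ℝ) < (k:ℝ) := by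
    have : (1:ℝ) ≤ (k:ℝ) := by exact_mod_cast hk1
    linarith
  have hkn : (k:ℝ) < (n:ℝ) := by
    have hceil : (k:ℝ) < (n:ℝ) ^ θ + 1 := Nat.ceil_lt_add_one (by positivity)
    have hsum : (n:ℝ) ^ θ + 1 ≤ 2 * (n:ℝ) ^ θ := by linarith
    have hmul : 2 * (n:ℝ) ^ θ ≤ (n:ℝ) ^ (1-θ) * (n:ℝ) ^ θ :=
      mul_le_mul_of_nonneg_right h2 (by positivity)
    have hpow : (n:ℝ) ^ (1-θ) * (n:ℝ) ^ θ = (n:ℝ) := by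
      rw [← Real.rpow_add hn0]
      norm_num
    linarith
  have hlogpos : 0 < Real.log ((n:ℝ) / (k:ℝ)) :=
    Real.log_pos ((one_lt_div hkpos).2 hkn)
  have hF : 0 < (k:ℝ) * Real.log ((n:ℝ) / (k:ℝ)) := mul_pos hkpos hlogpos
  have hne : (ddSetZBer θ q k).Nonempty := ddSetZBer_mem q θ k hq0 hq1 hθ0
  have hlb : sInf (ddSetZ θ q) + ε ≤ sInf (ddSetZBer θ q k) :=
    le_csInf hne (fun b hb => hbound k hkK b hb)
  have hlt : sInf (ddSetZ θ q) < sInf (ddSetZBer θ q k) := by linarith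
  exact mul_lt_mul_of_pos_right hlt hF

end
end

section
/- Let p, q ≥ 0 with p + q < 1, let h be the binary entropy in nats, and set φ = (h(p) − h(q))/(1−p−q). For γ ∈ [0,1] define T(γ) = (1−p)γ + q(1−γ) and I(γ) = h(T(γ)) − (γ·h(p) + (1−γ)·h(q)) (the mutual information of the p–q channel with input distribution P(X=0) = γ). Then the maximum of I over γ ∈ [0,1] is attained at γ* = (1/(1+e^φ) − q)/(1−p−q), and the maximum value equals D_KL(q ‖ 1/(1+e^φ)) = D_KL(p ‖ 1/(1+e^{−φ})). -/
open Real Set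

noncomputable section

/-- Binary entropy in nats. -/
def binEnt (x : ℝ) : ℝ := -x * Real.log x - (1 - x) * Real.log (1 - x)

/-- `P(Y = 0)` for the p–q channel with `P(X = 0) = γ`. -/
def Tpq (p q γ : ℝ) : ℝ := (1 - p) * γ + q * (1 - γ)

/-- Mutual information of the p–q channel with input distribution `P(X = 0) = γ`. -/
def mutInf (p q γ : ℝ) : ℝ := binEnt (Tpq p q γ) - (γ * binEnt p + (1 - γ) * binEnt q)

lemma mul_log_div_eq (r s : ℝ) (hs : s ≠ 0) :
    r * Real.log (r / s) = r * Real.log r - r * Real.log s := by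
  rcases eq_or_ne r 0 with h | h
  · simp [h]
  · rw [Real.log_div h hs]; ring

lemma klBer_expand (r s : ℝ) (hs0 : s ≠ 0) (hs1 : s ≠ 1) :
    klBer r s = -binEnt r - r * Real.log s - (1 - r) * Real.log (1 - s) := by
  unfold klBer binEnt
  rw [mul_log_div_eq r s hs0,
      mul_log_div_eq (1 - r) (1 - s) (sub_ne_zero.mpr (fun h => hs1 h.symm))]
  ring

lemma klBer_self (s : ℝ) (hs0 : s ≠ 0) (hs1 : s ≠ 1) : klBer s s = 0 := by
  have : (1:ℝ) - s ≠ 0 := sub_ne_zero.mpr (fun h => hs1 h.symm)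
  simp [klBer, div_self hs0, div_self this]

lemma binEnt_symm (x : ℝ) : binEnt (1 - x) = binEnt x := by
  unfold binEnt
  rw [show (1:ℝ) - (1 - x) = x by ring]
  ring

lemma klBer_nonneg (r s : ℝ) (hr0 : 0 ≤ r) (hr1 : r ≤ 1) (hs0 : 0 < s) (hs1 : s < 1) :
    0 ≤ klBer r s := by
  rcases eq_or_lt_of_le hr0 with h | hr0'
  · have : klBer r s = Real.log (1 / (1 - s)) := by simp [klBer, ← h]
    rw [this, one_div, Real.log_inv]
    have : Real.log (1 - s) ≤ 0 := Real.log_nonpos (by linarith) (by linarith)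
    linarith
  rcases eq_or_lt_of_le hr1 with h | hr1'
  · have : klBer r s = Real.log (1 / s) := by simp [klBer, h]
    rw [this, one_div, Real.log_inv]
    have : Real.log s ≤ 0 := Real.log_nonpos (by linarith) (by linarith)
    linarith
  have ha := Real.log_le_sub_one_of_pos (div_pos hs0 hr0')
  have hb := Real.log_le_sub_one_of_pos (div_pos (show (0:ℝ) < 1 - s by linarith)
    (show (0:ℝ) < 1 - r by linarith))
  have ea : Real.log (r / s) = -Real.log (s / r) := by rw [← Real.log_inv, inv_div]
  have eb : Real.log ((1 - r) / (1 - s)) = -Real.log ((1 - s) / (1 - r)) := by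
    rw [← Real.log_inv, inv_div]
  have c1 : r * Real.log (s / r) ≤ s - r := by
    have := mul_le_mul_of_nonneg_left ha hr0'.le
    have hrs : r * (s / r) = s := by field_simp
    nlinarith
  have c2 : (1 - r) * Real.log ((1 - s) / (1 - r)) ≤ r - s := by
    have := mul_le_mul_of_nonneg_left hb (show (0:ℝ) ≤ 1 - r by linarith)
    have hne : (1:ℝ) - r ≠ 0 := by linarith
    have hrs : (1 - r) * ((1 - s) / (1 - r)) = 1 - s := by field_simp
    nlinarith
  unfold klBer
  rw [ea, eb]
  nlinarith

/-- **Capacity of the p–q channel** (Lemma A.15).  With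
`φ = (h(p) - h(q))/(1-p-q)` and `γ* = (1/(1+e^φ) - q)/(1-p-q)`, the mutual information
`I(γ)` is maximized over `γ ∈ [0,1]` at `γ*`, and the maximum value equals
`D(q ‖ 1/(1+e^φ)) = D(p ‖ 1/(1+e^{-φ}))`. -/
theorem pq_channel_capacity
    (p q : ℝ) (hp : 0 ≤ p) (hq : 0 ≤ q) (hpq : p + q < 1) :
    (1 / (1 + Real.exp ((binEnt p - binEnt q) / (1 - p - q))) - q) / (1 - p - q) ∈
      Set.Icc (0 : ℝ) 1 ∧
    (∀ γ ∈ Set.Icc (0 : ℝ) 1, mutInf p q γ ≤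
      mutInf p q ((1 / (1 + Real.exp ((binEnt p - binEnt q) / (1 - p - q))) - q) /
        (1 - p - q))) ∧
    mutInf p q ((1 / (1 + Real.exp ((binEnt p - binEnt q) / (1 - p - q))) - q) /
        (1 - p - q)) =
      klBer q (1 / (1 + Real.exp ((binEnt p - binEnt q) / (1 - p - q)))) ∧
    klBer q (1 / (1 + Real.exp ((binEnt p - binEnt q) / (1 - p - q)))) =
      klBer p (1 / (1 + Real.exp (-((binEnt p - binEnt q) / (1 - p - q))))) := by
  have hc : (0:ℝ) < 1 - p - q := by linarith
  have hp1 : p < 1 := by linarith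
  have hq1 : q < 1 := by linarith
  set φ := (binEnt p - binEnt q) / (1 - p - q) with hφdef
  have hφc : binEnt p - binEnt q = (1 - p - q) * φ := by
    rw [hφdef]; field_simp
  set E := Real.exp φ with hEdef
  have hE : 0 < E := Real.exp_pos φ
  have h1E : (0:ℝ) < 1 + E := by linarith
  set s := 1 / (1 + E) with hsdef
  have hs0 : 0 < s := by positivity
  have hs1 : s < 1 := by rw [hsdef, div_lt_one h1E]; linarith
  have hlog : Real.log (1 - s) - Real.log s = φ := by
    rw [← Real.log_div (by rw [hsdef]; intro h; nlinarith [h]) (ne_of_gt hs0)]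
    have h2 : (1 - s) / s = E := by rw [hsdef]; field_simp; ring
    rw [h2, hEdef, Real.log_exp]
  -- q ≤ s
  have hqs : q ≤ s := by
    rcases eq_or_lt_of_le hq with h | hq'
    · linarith
    · have hkl := klBer_nonneg p (1 - q) hp hp1.le (by linarith) (by linarith)
      have hexp : klBer p (1 - q) =
          -binEnt p - p * Real.log (1 - q) - (1 - p) * Real.log q := by
        rw [klBer_expand p (1 - q) (by intro h; linarith [sub_eq_zero.mp h])
          (by intro h; nlinarith [h])]
        rw [show (1:ℝ) - (1 - q) = q by ring]
      have key : binEnt p - binEnt q =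
          -klBer p (1 - q) + (1 - p - q) * (Real.log (1 - q) - Real.log q) := by
        rw [hexp]; unfold binEnt; ring
      have hφle : φ ≤ Real.log (1 - q) - Real.log q := by
        have h2 : (1 - p - q) * φ ≤ (1 - p - q) * (Real.log (1 - q) - Real.log q) := by
          rw [← hφc]; linarith [key, hkl]
        exact le_of_mul_le_mul_left (by linarith [h2]) hc
      have hEle : E ≤ (1 - q) / q := by
        rw [hEdef]
        calc Real.exp φ ≤ Real.exp (Real.log (1 - q) - Real.log q) :=
              Real.exp_le_exp.mpr hφle
          _ = (1 - q) / q := by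
              rw [Real.exp_sub, Real.exp_log (by linarith), Real.exp_log hq']
      rw [hsdef, le_div_iff₀ h1E]
      have : q * ((1 - q) / q) = 1 - q := by field_simp
      nlinarith [mul_le_mul_of_nonneg_left hEle hq'.le]
  -- s ≤ 1 - p
  have hsp : s ≤ 1 - p := by
    rcases eq_or_lt_of_le hp with h | hp'
    · linarith
    · have hkl := klBer_nonneg q (1 - p) hq hq1.le (by linarith) (by linarith)
      have hexp : klBer q (1 - p) =
          -binEnt q - q * Real.log (1 - p) - (1 - q) * Real.log p := by
        rw [klBer_expand q (1 - p) (by intro h; linarith [sub_eq_zero.mp h])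
          (by intro h; nlinarith [h])]
        rw [show (1:ℝ) - (1 - p) = p by ring]
      have key : binEnt p - binEnt q =
          klBer q (1 - p) + (1 - p - q) * (Real.log p - Real.log (1 - p)) := by
        rw [hexp]; unfold binEnt; ring
      have hφge : Real.log p - Real.log (1 - p) ≤ φ := by
        have h2 : (1 - p - q) * (Real.log p - Real.log (1 - p)) ≤ (1 - p - q) * φ := by
          rw [← hφc]; linarith [key, hkl]
        exact le_of_mul_le_mul_left (by linarith [h2]) hc
      have hEge : p / (1 - p) ≤ E := by
        rw [hEdef]
        calc p / (1 - p) = Real.exp (Real.log p - Real.log (1 - p)) := by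
              rw [Real.exp_sub, Real.exp_log hp', Real.exp_log (by linarith)]
          _ ≤ Real.exp φ := Real.exp_le_exp.mpr hφge
      rw [hsdef, div_le_iff₀ h1E]
      have hne : (1:ℝ) - p ≠ 0 := by linarith
      have : (1 - p) * (p / (1 - p)) = p := by field_simp
      nlinarith [mul_le_mul_of_nonneg_left hEge (by linarith : (0:ℝ) ≤ 1 - p)]
  have hTlin : ∀ γ : ℝ, Tpq p q γ = q + (1 - p - q) * γ := by
    intro γ; unfold Tpq; ring
  have hTs : Tpq p q ((s - q) / (1 - p - q)) = s := by
    rw [hTlin]; field_simp; ring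
  have hid : ∀ γ : ℝ, mutInf p q γ = klBer q s - klBer (Tpq p q γ) s := by
    intro γ
    rw [klBer_expand q s (ne_of_gt hs0) (ne_of_lt hs1),
        klBer_expand (Tpq p q γ) s (ne_of_gt hs0) (ne_of_lt hs1)]
    unfold mutInf
    rw [hTlin]
    linear_combination (-γ) * hφc + ((1 - p - q) * γ) * hlog
  refine ⟨⟨div_nonneg (by linarith) hc.le, (div_le_one hc).mpr (by linarith)⟩, ?_, ?_, ?_⟩
  · intro γ hγ
    obtain ⟨hγ0, hγ1⟩ := hγ
    rw [hid γ, hid ((s - q) / (1 - p - q)), hTs,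
        klBer_self s (ne_of_gt hs0) (ne_of_lt hs1)]
    have hT0 : 0 ≤ Tpq p q γ := by rw [hTlin]; nlinarith
    have hT1 : Tpq p q γ ≤ 1 := by rw [hTlin]; nlinarith
    have := klBer_nonneg (Tpq p q γ) s hT0 hT1 hs0 hs1
    linarith
  · rw [hid, hTs, klBer_self s (ne_of_gt hs0) (ne_of_lt hs1)]
    ring
  · have h4 : 1 / (1 + Real.exp (-φ)) = 1 - s := by
      rw [Real.exp_neg, ← hEdef, hsdef]
      rw [eq_sub_iff_add_eq, div_add_div _ _ (by positivity) (ne_of_gt h1E),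
        div_eq_one_iff_eq (by positivity)]
      field_simp
      ring
    rw [h4]
    have h5 : klBer p (1 - s) = klBer (1 - p) s := by
      unfold klBer
      rw [show (1:ℝ) - (1 - s) = s by ring, show (1:ℝ) - (1 - p) = p by ring]
      ring
    rw [h5, klBer_expand q s (ne_of_gt hs0) (ne_of_lt hs1),
        klBer_expand (1 - p) s (ne_of_gt hs0) (ne_of_lt hs1), binEnt_symm]
    linear_combination hφc - (1 - p - q) * hlog

end
end
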